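/- As formal power series in q^{1/2}, the character of the irreducible Virasoro module M(1/2, 0) satisfies: ch_q M(1/2, 0) = (1/∏_{i=1}^∞ (1 - q^{2i})) · ∑_{n ∈ ℤ, n even} q^{n² + n/2}, where ch_q M(1/2, 0) is defined combinatorially as ∑_{k≥0} p_D(k) q^k with p_D(k) the number of partitions of k into distinct half-odd-integer parts (parts from {1/2, 3/2, 5/2, ...}) with an even number of parts. -/

import Mathlib

open PowerSeries

/-- `P` is the limit of the partial products of `f` in the formal power series topology. -/
def PSHasProd {R : Type*} [CommRing R] (f : ℕ → PowerSeries R) (P : PowerSeries R) : Prop :=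
  ∀ N : ℕ, ∃ M : ℕ, ∀ m ≥ M,
    PowerSeries.trunc N (∏ i ∈ Finset.range m, f i) = PowerSeries.trunc N P

/-- `S` is the limit over finite subsets of `ℤ` of the partial sums of `g` in the
formal power series topology. -/
def PSHasSumZ {R : Type*} [CommRing R] (g : ℤ → PowerSeries R) (S : PowerSeries R) : Prop :=
  ∀ N : ℕ, ∃ A : Finset ℤ, ∀ B : Finset ℤ, A ⊆ B →
    PowerSeries.trunc N (∑ n ∈ B, g n) = PowerSeries.trunc N S

namespace CharProof
open Finset

noncomputable section

/-- Gaussian binomial `[m choose k]` in `q = X^4`, as a power series over `ℚ`. -/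
def gb : ℕ → ℤ → PowerSeries ℚ
  | 0, k => if k = 0 then 1 else 0
  | (m+1), k => gb m k + X ^ (4*((m:ℤ)+1-k)).toNat * gb m (k-1)

def Ff (c : ℕ) : PowerSeries ℚ := ∏ i ∈ range c, (1 - X ^ (4*(i+1)))
def Qm (c : ℕ) : PowerSeries ℚ := ∏ i ∈ range c, (1 - (X : PowerSeries ℚ) ^ (2*(i+1)))
def Gn (n : ℕ) : PowerSeries ℚ := ∏ j ∈ range (2*n), (1 + (X : PowerSeries ℚ) ^ (2*j+1))
def ee (j : ℤ) : ℤ := 2*j^2 + j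
def Sn (n : ℕ) : PowerSeries ℚ :=
  ∑ k ∈ range (2*n+1), gb (2*n) k * X ^ (ee ((k:ℤ) - n)).toNat

lemma ee_nonneg (j : ℤ) : 0 ≤ ee j := by
  unfold ee
  rcases le_or_gt 0 j with h | h
  · nlinarith
  · nlinarith

lemma gb_neg' : ∀ (m : ℕ) {k : ℤ}, k < 0 → gb m k = 0 := by
  intro m
  induction m with
  | zero => intro k hk; simp [gb]; omega
  | succ m ih =>
      intro k hk
      rw [gb, ih hk, ih (by omega)]
      simp

lemma gb_gt {m : ℕ} {k : ℤ} (hk : (m:ℤ) < k) : gb m k = 0 := by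
  induction m generalizing k with
  | zero => simp [gb]; omega
  | succ m ih =>
      rw [gb, ih (by omega), ih (by omega)]
      simp

lemma gb_zero (m : ℕ) : gb m 0 = 1 := by
  induction m with
  | zero => simp [gb]
  | succ m ih =>
      rw [gb, ih, gb_neg' m (show (0:ℤ)-1 < 0 by omega)]; simp

lemma gb_diag (m : ℕ) : gb m m = 1 := by
  induction m with
  | zero => simp [gb]
  | succ m ih =>
      rw [gb, gb_gt (by push_cast; omega)]
      have h1 : ((m+1:ℕ):ℤ) - 1 = (m:ℤ) := by push_cast; ring
      have h2 : (4*((m:ℤ)+1-((m+1:ℕ):ℤ))).toNat = 0 := by push_cast; omega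
      rw [h1, h2, ih]
      simp

end

end CharProof

namespace CharProof
noncomputable section
open Finset

lemma pascalB (m : ℕ) (k : ℤ) :
    gb (m+1) k = X ^ (4*k).toNat * gb m k + gb m (k-1) := by
  induction m generalizing k with
  | zero =>
      by_cases h0 : k = 0
      · subst h0; norm_num [gb]
      by_cases h1 : k = 1
      · subst h1; norm_num [gb]
      · simp [gb, h0, sub_eq_zero, h1]
  | succ m ih =>
      conv_lhs => rw [gb, ih k, ih (k-1)]
      conv_rhs => rw [gb, gb]
      have hX : (X : PowerSeries ℚ)^((4*(((m+1:ℕ):ℤ)+1-k)).toNat)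
          = X^((4*((m:ℤ)+1-(k-1))).toNat) := by congr 1; omega
      by_cases hk : 1 ≤ k ∧ k ≤ (m:ℤ)+1
      · have hE : (X : PowerSeries ℚ)^((4*(((m+1:ℕ):ℤ)+1-k)).toNat) * X^((4*(k-1)).toNat)
            = X^((4*k).toNat) * X^((4*((m:ℤ)+1-k)).toNat) := by
          rw [← pow_add, ← pow_add]; congr 1; omega
        linear_combination gb m (k-1) * hE + gb m (k-1-1) * hX
      · have h0 : gb m (k-1) = 0 := by
          rcases not_and_or.mp hk with h | h
          · exact gb_neg' m (by omega)
          · exact gb_gt (by omega)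
        rw [h0]
        linear_combination gb m (k-1-1) * hX
end
end CharProof

namespace CharProof
noncomputable section
open Finset

lemma twostep (m : ℕ) (k : ℤ) :
    gb (m+2) k = X ^ (4*k).toNat * gb m k + (1 + X^(4*(m+1))) * gb m (k-1)
      + X ^ (4*((m:ℤ)+2-k)).toNat * gb m (k-2) := by
  rw [show m+2 = (m+1)+1 from rfl, pascalB (m+1) k]
  conv_lhs => rw [gb, gb]
  rw [show k-1-1 = k-2 from by ring]
  have hX : (X : PowerSeries ℚ)^((4*((m:ℤ)+1-(k-1))).toNat)
      = X^((4*((m:ℤ)+2-k)).toNat) := by congr 1; omega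
  by_cases hk : 1 ≤ k ∧ k ≤ (m:ℤ)+1
  · have hE : (X:PowerSeries ℚ)^((4*k).toNat) * X^((4*((m:ℤ)+1-k)).toNat)
        = X^(4*(m+1)) := by
      rw [← pow_add]; congr 1; omega
    linear_combination gb m (k-1) * hE + gb m (k-2) * hX
  · have h0 : gb m (k-1) = 0 := by
      rcases not_and_or.mp hk with h | h
      · exact gb_neg' m (by omega)
      · exact gb_gt (by omega)
    rw [h0]
    linear_combination gb m (k-2) * hX
end
end CharProof

namespace CharProof
noncomputable section
open Finset

lemma Ff_zero : Ff 0 = 1 := Finset.prod_range_zero _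

lemma Ff_succ (c : ℕ) : Ff (c+1) = Ff c * (1 - X^(4*(c+1))) := Finset.prod_range_succ _ _

lemma gb_mul_F : ∀ m k : ℕ, k ≤ m → gb m k * Ff k * Ff (m-k) = Ff m := by
  intro m
  induction m with
  | zero =>
      intro k hk
      interval_cases k
      simp [gb, Ff]
  | succ m ih =>
      intro k hk
      rcases Nat.eq_or_lt_of_le hk with he | hlt
      · subst he
        rw [gb_diag]
        simp [Ff_zero]
      · have hk1 : k ≤ m := by omega
        rcases k with _ | k'
        · simp only [Nat.cast_zero, gb_zero, Ff_zero, one_mul, Nat.sub_zero]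
        · set a := m - (k'+1) with ha
          have ihA := ih (k'+1) (by omega)
          have ihB := ih k' (by omega)
          have hgb : gb (m+1) ((k'+1:ℕ):ℤ)
              = gb m ((k'+1:ℕ):ℤ) + X^(4*(a+1)) * gb m (k':ℤ) := by
            have h1 : ((4 * ((m:ℤ) + 1 - ((k'+1:ℕ):ℤ))).toNat) = 4*(a+1) := by omega
            have h2 : ((k'+1:ℕ):ℤ) - 1 = (k':ℤ) := by push_cast; ring
            rw [gb, h1, h2]
          rw [hgb, show m+1-(k'+1) = a+1 from by omega, Ff_succ k', Ff_succ a]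
          rw [← ha, Ff_succ k'] at ihA
          rw [show m - k' = a+1 from by omega, Ff_succ a] at ihB
          have hE : (X:PowerSeries ℚ)^(4*(a+1)) * X^(4*(k'+1)) = X^(4*(m+1)) := by
            rw [← pow_add]; congr 1; omega
          rw [Ff_succ m]
          linear_combination (1 - (X:PowerSeries ℚ)^(4*(a+1))) * ihA
            + (X:PowerSeries ℚ)^(4*(a+1)) * (1 - (X:PowerSeries ℚ)^(4*(k'+1))) * ihB
            - Ff m * hE
end
end CharProof

namespace CharProof
noncomputable section
open Finset

lemma pairG (n : ℕ) :
    Gn n = ∏ i ∈ range n, ((1+(X:PowerSeries ℚ)^(4*i+1))*(1+(X:PowerSeries ℚ)^(4*i+3))) := by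
  induction n with
  | zero => simp [Gn]
  | succ n ih =>
      unfold Gn at *
      rw [show 2*(n+1) = (2*n+1)+1 from by ring, prod_range_succ, prod_range_succ,
        prod_range_succ, ih, show 2*(2*n)+1 = 4*n+1 from by ring,
        show 2*(2*n+1)+1 = 4*n+3 from by ring]
      ring

lemma Sn_succ (n : ℕ) :
    Sn (n+1) = Sn n * (1 + X^(4*n+1) + X^(4*n+3) + X^(8*n+4)) := by
  have hsplit : Sn (n+1)
      = (∑ k ∈ range (2*n+3), X ^ (4*(k:ℤ)).toNat * gb (2*n) k * X ^ (ee ((k:ℤ) - ((n:ℤ)+1))).toNat)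
      + (∑ k ∈ range (2*n+3), (1 + X^(4*(2*n+1))) * gb (2*n) ((k:ℤ)-1) * X ^ (ee ((k:ℤ) - ((n:ℤ)+1))).toNat)
      + (∑ k ∈ range (2*n+3), X ^ (4*((2*n:ℤ)+2-(k:ℤ))).toNat * gb (2*n) ((k:ℤ)-2) * X ^ (ee ((k:ℤ) - ((n:ℤ)+1))).toNat) := by
    unfold Sn
    rw [← Finset.sum_add_distrib, ← Finset.sum_add_distrib]
    apply Finset.sum_congr (by rw [show 2*(n+1)+1 = 2*n+3 from by ring])
    intro k _
    rw [show (2*(n+1)) = 2*n+2 from by ring, twostep (2*n) k]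
    push_cast
    ring
  rw [hsplit]
  have hT1 : (∑ k ∈ range (2*n+3), (X:PowerSeries ℚ) ^ (4*(k:ℤ)).toNat * gb (2*n) k * X ^ (ee ((k:ℤ) - ((n:ℤ)+1))).toNat)
      = X^(4*n+1) * Sn n := by
    rw [show 2*n+3 = (2*n+2)+1 from rfl, Finset.sum_range_succ,
      show 2*n+2 = (2*n+1)+1 from rfl, Finset.sum_range_succ,
      gb_gt (by push_cast; omega), gb_gt (by push_cast; omega)]
    simp only [mul_zero, zero_mul, add_zero]
    unfold Sn
    rw [Finset.mul_sum]
    apply Finset.sum_congr rfl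
    intro k hk
    have h1 : ee ((k:ℤ) - ((n:ℤ)+1)) = ee ((k:ℤ)-(n:ℤ)) + 1 - 4*((k:ℤ)-(n:ℤ)) := by
      unfold ee; push_cast; ring
    have h2 := ee_nonneg ((k:ℤ) - ((n:ℤ)+1))
    have h3 := ee_nonneg ((k:ℤ) - (n:ℤ))
    have hexp : (X:PowerSeries ℚ) ^ (4*(k:ℤ)).toNat * X ^ (ee ((k:ℤ) - ((n:ℤ)+1))).toNat
        = X^(4*n+1) * X ^ (ee ((k:ℤ)-(n:ℤ))).toNat := by
      rw [← pow_add, ← pow_add]; congr 1; omega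
    linear_combination gb (2*n) k * hexp
  have hT2 : (∑ k ∈ range (2*n+3), (1 + (X:PowerSeries ℚ)^(4*(2*n+1))) * gb (2*n) ((k:ℤ)-1) * X ^ (ee ((k:ℤ) - ((n:ℤ)+1))).toNat)
      = (1 + X^(4*(2*n+1))) * Sn n := by
    rw [show 2*n+3 = (2*n+2)+1 from rfl, Finset.sum_range_succ']
    rw [show ((0:ℕ):ℤ) - 1 = (-1 : ℤ) from by norm_num, gb_neg' (2*n) (by omega)]
    simp only [mul_zero, zero_mul, add_zero]
    rw [show 2*n+2 = (2*n+1)+1 from rfl, Finset.sum_range_succ,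
      show ((2*n+1+1:ℕ):ℤ) - 1 = ((2*n+1 : ℕ):ℤ) from by push_cast; ring,
      gb_gt (by push_cast; omega)]
    simp only [mul_zero, zero_mul, add_zero]
    unfold Sn
    rw [Finset.mul_sum]
    apply Finset.sum_congr rfl
    intro k hk
    rw [show ((k+1:ℕ):ℤ) - 1 = (k:ℤ) from by push_cast; ring,
      show ((k+1:ℕ):ℤ) - ((n:ℤ)+1) = (k:ℤ) - (n:ℤ) from by push_cast; ring]
    ring
  have hT3 : (∑ k ∈ range (2*n+3), (X:PowerSeries ℚ) ^ (4*((2*n:ℤ)+2-(k:ℤ))).toNat * gb (2*n) ((k:ℤ)-2) * X ^ (ee ((k:ℤ) - ((n:ℤ)+1))).toNat)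
      = X^(4*n+3) * Sn n := by
    rw [show 2*n+3 = (2*n+2)+1 from rfl, Finset.sum_range_succ']
    rw [show ((0:ℕ):ℤ) - 2 = (-2 : ℤ) from by norm_num, gb_neg' (2*n) (by omega)]
    simp only [mul_zero, zero_mul, add_zero]
    rw [show 2*n+2 = (2*n+1)+1 from rfl, Finset.sum_range_succ']
    rw [show ((0+1:ℕ):ℤ) - 2 = (-1 : ℤ) from by norm_num, gb_neg' (2*n) (by omega)]
    simp only [mul_zero, zero_mul, add_zero]
    unfold Sn
    rw [Finset.mul_sum]
    apply Finset.sum_congr rfl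
    intro k hk
    have hk' : k ≤ 2*n := by have := Finset.mem_range.mp hk; omega
    rw [show ((k+1+1:ℕ):ℤ) - 2 = (k:ℤ) from by push_cast; ring]
    have h1 : ee (((k+1+1:ℕ):ℤ) - ((n:ℤ)+1)) = ee ((k:ℤ)-(n:ℤ)) + 4*((k:ℤ)-(n:ℤ)) + 3 := by
      unfold ee; push_cast; ring
    have h2 := ee_nonneg (((k+1+1:ℕ):ℤ) - ((n:ℤ)+1))
    have h3 := ee_nonneg ((k:ℤ) - (n:ℤ))
    have hexp : (X:PowerSeries ℚ) ^ (4*((2*n:ℤ)+2-((k+1+1:ℕ):ℤ))).toNat * X ^ (ee (((k+1+1:ℕ):ℤ) - ((n:ℤ)+1))).toNat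
        = X^(4*n+3) * X ^ (ee ((k:ℤ)-(n:ℤ))).toNat := by
      rw [← pow_add, ← pow_add]; congr 1; omega
    linear_combination gb (2*n) k * hexp
  rw [hT1, hT2, hT3, show 4*(2*n+1) = 8*n+4 from by ring]
  ring
end
end CharProof

namespace CharProof
noncomputable section
open Finset

lemma prod_eq_Sn : ∀ n : ℕ,
    (∏ i ∈ range n, ((1+(X:PowerSeries ℚ)^(4*i+1))*(1+(X:PowerSeries ℚ)^(4*i+3)))) = Sn n := by
  intro n
  induction n with
  | zero => simp [Sn, gb, ee]
  | succ n ih => rw [prod_range_succ, ih, Sn_succ]; ring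

lemma Gn_eq_Sn (n : ℕ) : Gn n = Sn n := (pairG n).trans (prod_eq_Sn n)
end
end CharProof

namespace CharProof
noncomputable section
open Finset

def Cg (N : ℕ) (x y : PowerSeries ℚ) : Prop := ∃ z, x - y = X^N * z

lemma Cg_coeff {N : ℕ} {x y : PowerSeries ℚ} (h : Cg N x y) {d : ℕ} (hd : d < N) :
    coeff (R := ℚ) d x = coeff (R := ℚ) d y := by
  obtain ⟨z, hz⟩ := h
  rw [mul_comm] at hz
  have h0 : coeff (R := ℚ) d (x - y) = 0 := by
    rw [hz, PowerSeries.coeff_mul_X_pow', if_neg (by omega)]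
  rw [map_sub, sub_eq_zero] at h0
  exact h0

lemma Ff_cong (c : ℕ) : ∀ m, c ≤ m → Cg (4*c+4) (Ff m) (Ff c) := by
  intro m
  induction m with
  | zero =>
      intro h
      have : c = 0 := by omega
      subst this
      exact ⟨0, by simp⟩
  | succ m ih =>
      intro h
      rcases Nat.eq_or_lt_of_le h with he | hlt
      · subst he; exact ⟨0, by simp⟩
      · have hm : c ≤ m := by omega
        obtain ⟨z, hz⟩ := ih hm
        refine ⟨z - Ff m * X^(4*(m+1)-(4*c+4)), ?_⟩
        rw [Ff_succ]
        have hp : (X:PowerSeries ℚ)^(4*(m+1)) = X^(4*c+4) * X^(4*(m+1)-(4*c+4)) := by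
          rw [← pow_add]; congr 1; omega
        linear_combination hz - Ff m * hp

lemma constantCoeff_Ff (c : ℕ) : constantCoeff (R := ℚ) (Ff c) = 1 := by
  unfold Ff
  rw [map_prod]
  apply Finset.prod_eq_one
  intro i _
  rw [map_sub, map_one, map_pow, constantCoeff_X]
  simp

lemma key (k n k' : ℕ) (h1 : k ≤ k') (h2 : k' ≤ 2*n) (h3 : k + k' ≤ 2*n) (h4 : k ≤ n) :
    Cg (2*k+1) (Ff n * gb (2*n) k') 1 := by
  have hprod := gb_mul_F (2*n) k' h2
  have hIc : constantCoeff (R := ℚ) (Ff k) ≠ 0 := by rw [constantCoeff_Ff]; norm_num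
  have hI : (Ff k)⁻¹ * Ff k = 1 := PowerSeries.inv_mul_cancel _ hIc
  have w : ∀ m, k ≤ m → Cg (2*k+1) (Ff m) (Ff k) := by
    intro m hm
    obtain ⟨z, hz⟩ := Ff_cong k m hm
    exact ⟨X^(4*k+4-(2*k+1)) * z, by
      rw [hz, ← mul_assoc, ← pow_add]
      congr 2
      omega⟩
  obtain ⟨z1, e1⟩ := w n h4
  obtain ⟨z2, e2⟩ := w k' h1
  obtain ⟨z3, e3⟩ := w (2*n - k') (by omega)
  obtain ⟨z4, e4⟩ := w (2*n) (by omega)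
  set g := gb (2*n) (k' : ℤ) with hg
  set I := (Ff k)⁻¹ with hIdef
  set W := g*(Ff k)*(Ff k)*z1 - g*(Ff k)*(Ff k)*z2 - g*(Ff k)*(Ff k')*z3 + (Ff k)*z4 with hW
  have step1 : Ff n * g * (Ff k * Ff k) - Ff k * Ff k = X^(2*k+1) * W := by
    rw [hW]
    linear_combination (g*(Ff k)*(Ff k))*e1 - (g*(Ff k)*(Ff k))*e2
      - (g*(Ff k)*(Ff k'))*e3 + (Ff k)*e4 + (Ff k)*hprod
  refine ⟨I*I*W, ?_⟩
  linear_combination I*I*step1 - (I*(Ff k) + 1)*(Ff n * g - 1)*hI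
end
end CharProof

namespace CharProof
noncomputable section
open Finset

lemma bound_j {k : ℕ} {j : ℤ} (h : ee j ≤ 2*k) : -(k:ℤ) ≤ j ∧ j ≤ k := by
  unfold ee at h
  constructor
  · by_contra hc
    push_neg at hc
    have h1 : j ≤ -(k:ℤ) - 1 := by omega
    nlinarith [mul_nonneg (sub_nonneg.mpr (show (1:ℤ) ≤ -j by omega))
      (sub_nonneg.mpr (show (k:ℤ) + 1 ≤ -j by omega)), Int.natCast_nonneg k]
  · by_contra hc
    push_neg at hc
    have h1 : (k:ℤ) + 1 ≤ j := by omega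
    nlinarith [mul_nonneg (sub_nonneg.mpr (show (1:ℤ) ≤ j by omega))
      (sub_nonneg.mpr (show (k:ℤ) + 1 ≤ j by omega)), Int.natCast_nonneg k]

lemma K1 (k n : ℕ) (hn : 2*k+2 ≤ n) :
    coeff (R := ℚ) (2*k) (Ff n * Gn n)
      = (((Finset.Icc (-(k:ℤ)) (k:ℤ)).filter (fun j => ee j = 2*(k:ℤ))).card : ℚ) := by
  rw [Gn_eq_Sn]
  unfold Sn
  rw [Finset.mul_sum, map_sum]
  have hterm : ∀ k' ∈ range (2*n+1),
      coeff (R := ℚ) (2*k) (Ff n * (gb (2*n) (k':ℤ) * X ^ (ee ((k':ℤ) - (n:ℤ))).toNat))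
        = if ee ((k':ℤ) - (n:ℤ)) = 2*(k:ℤ) then 1 else 0 := by
    intro k' hk'
    have hk'r : k' ≤ 2*n := by have := Finset.mem_range.mp hk'; omega
    have hee := ee_nonneg ((k':ℤ) - (n:ℤ))
    rw [show Ff n * (gb (2*n) (k':ℤ) * X ^ (ee ((k':ℤ) - (n:ℤ))).toNat)
        = (Ff n * gb (2*n) (k':ℤ)) * X ^ (ee ((k':ℤ) - (n:ℤ))).toNat from by ring,
      PowerSeries.coeff_mul_X_pow']
    by_cases hle : (ee ((k':ℤ) - (n:ℤ))).toNat ≤ 2*k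
    · rw [if_pos hle]
      obtain ⟨hb1, hb2⟩ := bound_j (k := k) (j := (k':ℤ) - (n:ℤ)) (by omega)
      have hkey := key k n k' (by omega) (by omega) (by omega) (by omega)
      rw [Cg_coeff hkey (by omega), PowerSeries.coeff_one]
      by_cases he : ee ((k':ℤ) - (n:ℤ)) = 2*(k:ℤ)
      · rw [if_pos (by omega), if_pos he]
      · rw [if_neg (by omega), if_neg he]
    · rw [if_neg hle, if_neg (by omega)]
  rw [Finset.sum_congr rfl hterm]
  have hbij : (∑ k' ∈ range (2*n+1), if ee ((k':ℤ) - (n:ℤ)) = 2*(k:ℤ) then (1:ℚ) else 0)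
      = ∑ j ∈ Finset.Icc (-(n:ℤ)) (n:ℤ), if ee j = 2*(k:ℤ) then (1:ℚ) else 0 := by
    refine Finset.sum_nbij' (t := Finset.Icc (-(n:ℤ)) (n:ℤ))
      (g := fun j => if ee j = 2*(k:ℤ) then (1:ℚ) else 0)
      (fun k' => (k':ℤ) - (n:ℤ)) (fun j => (j + (n:ℤ)).toNat) ?_ ?_ ?_ ?_ ?_
    · intro a ha
      have := Finset.mem_range.mp ha
      rw [Finset.mem_Icc]
      omega
    · intro a ha
      have := Finset.mem_Icc.mp ha
      rw [Finset.mem_range]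
      omega
    · intro a ha; omega
    · intro a ha
      have := Finset.mem_Icc.mp ha
      omega
    · intro a ha; rfl
  rw [hbij, ← Finset.sum_subset (Finset.Icc_subset_Icc (by omega) (by omega) :
      Finset.Icc (-(k:ℤ)) (k:ℤ) ⊆ Finset.Icc (-(n:ℤ)) (n:ℤ))]
  · rw [Finset.sum_boole]
  · intro x hx hnx
    rw [if_neg]
    intro he
    obtain ⟨hb1, hb2⟩ := bound_j (k := k) (j := x) (le_of_eq he)
    exact hnx (Finset.mem_Icc.mpr ⟨hb1, hb2⟩)
end
end CharProof

namespace CharProof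
noncomputable section
open Finset

lemma coeff_prod_gen (c : ℚ) (w : ℕ → ℕ) (s : Finset ℕ) (a : ℕ) :
    coeff (R := ℚ) a (∏ i ∈ s, (1 + PowerSeries.C (R := ℚ) c * X^(w i)))
      = ∑ t ∈ s.powerset, (if a = ∑ i ∈ t, w i then c^t.card else 0) := by
  classical
  have hprod : (∏ i ∈ s, (1 + PowerSeries.C (R := ℚ) c * X^(w i)))
      = ∑ t ∈ s.powerset, (PowerSeries.C (R := ℚ) (c^t.card)) * X^(∑ i ∈ t, w i) := by
    rw [show (∏ i ∈ s, (1 + PowerSeries.C (R := ℚ) c * X^(w i)))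
        = ∏ i ∈ s, (PowerSeries.C (R := ℚ) c * X^(w i) + 1) from Finset.prod_congr rfl
          (fun i _ => by ring), Finset.prod_add]
    apply Finset.sum_congr rfl
    intro t _
    rw [Finset.prod_const_one, mul_one, Finset.prod_mul_distrib,
      Finset.prod_const, Finset.prod_pow_eq_pow_sum, map_pow]
  rw [hprod, map_sum]
  apply Finset.sum_congr rfl
  intro t _
  rw [PowerSeries.coeff_C_mul, PowerSeries.coeff_X_pow]
  simp [mul_ite]

lemma coeff_Ff (m a : ℕ) :
    coeff (R := ℚ) a (Ff m)
      = ∑ t ∈ (range m).powerset, (if a = ∑ i ∈ t, 4*(i+1) then ((-1:ℚ))^t.card else 0) := by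
  rw [show Ff m = ∏ i ∈ range m, (1 + PowerSeries.C (R := ℚ) (-1) * X^(4*(i+1))) from
    Finset.prod_congr rfl (fun i _ => by rw [map_neg, map_one]; ring), coeff_prod_gen]

lemma coeff_Qm (m a : ℕ) :
    coeff (R := ℚ) a (Qm m)
      = ∑ t ∈ (range m).powerset, (if a = ∑ i ∈ t, 2*(i+1) then ((-1:ℚ))^t.card else 0) := by
  rw [show Qm m = ∏ i ∈ range m, (1 + PowerSeries.C (R := ℚ) (-1) * X^(2*(i+1))) from
    Finset.prod_congr rfl (fun i _ => by rw [map_neg, map_one]; ring), coeff_prod_gen]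

lemma coeff_Gn (m a : ℕ) :
    coeff (R := ℚ) a (Gn m)
      = ∑ t ∈ (range (2*m)).powerset, (if a = ∑ i ∈ t, (2*i+1) then (1:ℚ) else 0) := by
  rw [show Gn m = ∏ i ∈ range (2*m), (1 + PowerSeries.C (R := ℚ) 1 * X^(2*i+1)) from
    Finset.prod_congr rfl (fun i _ => by rw [map_one]; ring), coeff_prod_gen]
  simp

lemma FfQ (m a : ℕ) : coeff (R := ℚ) (2*a) (Ff m) = coeff (R := ℚ) a (Qm m) := by
  rw [coeff_Ff, coeff_Qm]
  apply Finset.sum_congr rfl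
  intro t _
  have hs : (∑ i ∈ t, 4*(i+1)) = 2 * ∑ i ∈ t, 2*(i+1) := by
    rw [Finset.mul_sum]
    exact Finset.sum_congr rfl (fun i _ => by ring)
  rw [hs]
  by_cases h : a = ∑ i ∈ t, 2*(i+1)
  · rw [if_pos (by omega), if_pos h]
  · rw [if_neg (by omega), if_neg h]

lemma Ff_odd (m a : ℕ) : coeff (R := ℚ) (2*a+1) (Ff m) = 0 := by
  rw [coeff_Ff]
  apply Finset.sum_eq_zero
  intro t _
  have hs : (∑ i ∈ t, 4*(i+1)) = 2 * ∑ i ∈ t, 2*(i+1) := by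
    rw [Finset.mul_sum]
    exact Finset.sum_congr rfl (fun i _ => by ring)
  rw [if_neg (by omega)]

lemma parity_card {A : Finset ℕ} {b : ℕ} (h : ∑ j ∈ A, (2*j+1) = 2*b) : Even A.card := by
  have hs : ∑ j ∈ A, (2*j+1) = 2*(∑ j ∈ A, j) + A.card := by
    rw [Finset.sum_add_distrib, Finset.sum_const, Finset.mul_sum, smul_eq_mul, mul_one]
  rw [Nat.even_iff]
  omega

lemma natCard_coe (s : Finset (Finset ℕ)) : Nat.card ↑(s : Set (Finset ℕ)) = s.card := by
  simp [Nat.card_eq_fintype_card]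

lemma coeff_Gn_card (m b : ℕ) (hb : b ≤ 2*m) :
    coeff (R := ℚ) (2*b) (Gn m)
      = (Nat.card {A : Finset ℕ | ∑ j ∈ A, (2*j+1) = 2*b ∧ Even A.card} : ℚ) := by
  classical
  rw [coeff_Gn, Finset.sum_boole]
  congr 1
  have hset : {A : Finset ℕ | ∑ j ∈ A, (2*j+1) = 2*b ∧ Even A.card}
      = ↑(((range (2*m)).powerset).filter (fun A => 2*b = ∑ i ∈ A, (2*i+1))) := by
    ext A
    simp only [Set.mem_setOf_eq, Finset.coe_filter, Finset.mem_powerset, Set.mem_setOf_eq]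
    constructor
    · rintro ⟨h1, h2⟩
      refine ⟨?_, h1.symm⟩
      intro j hj
      have hle : 2*j+1 ≤ ∑ i ∈ A, (2*i+1) :=
        Finset.single_le_sum (f := fun i => 2*i+1) (fun i _ => Nat.zero_le _) hj
      rw [Finset.mem_range]
      omega
    · rintro ⟨h1, h2⟩
      exact ⟨h2.symm, parity_card h2.symm⟩
  rw [hset, natCard_coe]
end
end CharProof

namespace CharProof
noncomputable section
open Finset

def Lser : PowerSeries ℚ := PowerSeries.mk (fun k =>
  (Nat.card {A : Finset ℕ | ∑ j ∈ A, (2 * j + 1) = 2 * k ∧ Even A.card} : ℚ))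

lemma evenSplit (f : ℕ → ℚ) (hf : ∀ a, f (2*a+1) = 0) :
    ∀ k, ∑ c ∈ range (2*k+1), f c = ∑ a ∈ range (k+1), f (2*a) := by
  intro k
  induction k with
  | zero => simp
  | succ k ih =>
      rw [show 2*(k+1)+1 = (2*k+1)+1+1 from by ring, Finset.sum_range_succ,
        Finset.sum_range_succ, ih, hf k,
        show 2*k+1+1 = 2*(k+1) from by ring]
      conv_rhs => rw [Finset.sum_range_succ]
      ring

lemma K2 (k m : ℕ) (hm : k+1 ≤ m) :
    coeff (R := ℚ) k (Qm m * Lser) = coeff (R := ℚ) (2*k) (Ff m * Gn m) := by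
  rw [PowerSeries.coeff_mul, PowerSeries.coeff_mul,
    Finset.Nat.sum_antidiagonal_eq_sum_range_succ_mk,
    Finset.Nat.sum_antidiagonal_eq_sum_range_succ_mk,
    show (2*k).succ = 2*k+1 from rfl,
    evenSplit (fun c => coeff (R := ℚ) c (Ff m) * coeff (R := ℚ) (2*k - c) (Gn m))
      (fun a => by rw [Ff_odd]; ring) k,
    show k.succ = k+1 from rfl]
  apply Finset.sum_congr rfl
  intro a ha
  have ha' : a ≤ k := by have := Finset.mem_range.mp ha; omega
  dsimp only
  rw [FfQ, show 2*k - 2*a = 2*(k-a) from by omega, coeff_Gn_card m (k-a) (by omega)]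
  simp only [Lser, PowerSeries.coeff_mk]
end
end CharProof

namespace CharProof
noncomputable section
open Finset

lemma four_sq_add (m : ℤ) : 0 ≤ 4*m^2 + m := by
  rcases le_or_gt 0 m with h | h
  · nlinarith
  · nlinarith

lemma coeff_Ssum (k : ℕ) (B : Finset ℤ)
    (hB : Finset.Icc (-(2*(k:ℤ)+2)) (2*(k:ℤ)+2) ⊆ B) :
    coeff (R := ℚ) k (∑ n ∈ B, if Even n then (X:PowerSeries ℚ)^((n^2 + n/2).toNat) else 0)
      = (((Finset.Icc (-(k:ℤ)) (k:ℤ)).filter (fun j => ee j = 2*(k:ℤ))).card : ℚ) := by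
  classical
  rw [map_sum]
  have hterm : ∀ n ∈ B, coeff (R := ℚ) k (if Even n then (X:PowerSeries ℚ)^((n^2+n/2).toNat) else 0)
      = if (Even n ∧ (n^2+n/2).toNat = k) then 1 else 0 := by
    intro n _
    by_cases he : Even n
    · rw [if_pos he, PowerSeries.coeff_X_pow]
      by_cases h2 : (n^2+n/2).toNat = k
      · rw [if_pos h2.symm, if_pos ⟨he, h2⟩]
      · rw [if_neg (fun hh => h2 hh.symm), if_neg (by tauto)]
    · rw [if_neg he, map_zero, if_neg (by tauto)]
  rw [Finset.sum_congr rfl hterm, Finset.sum_boole]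
  congr 1
  have hsets : B.filter (fun n => Even n ∧ (n^2+n/2).toNat = k)
      = (Finset.Icc (-(k:ℤ)) (k:ℤ)).filter (fun j => ee j = 2*(k:ℤ)) := by
    ext n
    simp only [Finset.mem_filter, Finset.mem_Icc]
    constructor
    · rintro ⟨hnB, he, htn⟩
      obtain ⟨m, hm⟩ := he
      have hdiv : n/2 = m := by omega
      have hval : n^2 + n/2 = 4*m^2 + m := by
        rw [hm, show (m+m)/2 = m from by omega]; ring
      have hpos : 0 ≤ n^2 + n/2 := by rw [hval]; exact four_sq_add m
      have heq : n^2 + n/2 = (k:ℤ) := by omega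
      rw [hval] at heq
      have hee : ee n = 2*(k:ℤ) := by
        unfold ee
        rw [hm]
        linear_combination 2 * heq
      obtain ⟨hb1, hb2⟩ := bound_j (le_of_eq hee)
      exact ⟨⟨hb1, hb2⟩, hee⟩
    · rintro ⟨⟨hb1, hb2⟩, hee⟩
      have he : Even n := ⟨(k:ℤ) - n^2, by unfold ee at hee; linarith⟩
      obtain ⟨m, hm⟩ := he
      have hdiv : n/2 = m := by omega
      have hval : n^2 + n/2 = 4*m^2 + m := by
        rw [hm, show (m+m)/2 = m from by omega]; ring
      have heq : n^2 + n/2 = (k:ℤ) := by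
        unfold ee at hee
        rw [hval]
        rw [hm] at hee
        have h8 : 8*m^2 + 2*m = 2*(k:ℤ) := by linear_combination hee
        linarith
      refine ⟨hB ?_, ⟨m, hm⟩, by omega⟩
      rw [Finset.mem_Icc]
      omega
  rw [hsets]
end
end CharProof

namespace CharProof
noncomputable section
open Finset

lemma constantCoeff_Qm (c : ℕ) : constantCoeff (R := ℚ) (Qm c) = 1 := by
  unfold Qm
  rw [map_prod]
  apply Finset.prod_eq_one
  intro i _
  rw [map_sub, map_one, map_pow, constantCoeff_X]
  simp
end
end CharProof


open CharProof in
/-- The character of `M(1/2, 0)`: the generating series `∑_k p_D(k) q^k`, where `p_D(k)` is the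
number of partitions of `k` into distinct half-odd-integer parts (a part `(2j+1)/2` is encoded by
`j : ℕ`, and the sum condition `∑ (2j+1)/2 = k` reads `∑ (2j+1) = 2k`) with an even number of
parts, equals `(1/∏_{i≥1}(1 - q^{2i})) · ∑_{n even} q^{n² + n/2}`. -/
theorem character_M_half_zero (P S : PowerSeries ℚ)
    (hP : PSHasProd (fun i => 1 - (PowerSeries.X : PowerSeries ℚ) ^ (2 * (i + 1))) P)
    (hS : PSHasSumZ (fun n => if Even n then
      (PowerSeries.X : PowerSeries ℚ) ^ (n ^ 2 + n / 2).toNat else 0) S) :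
    PowerSeries.mk (fun k =>
        (Nat.card {A : Finset ℕ | ∑ j ∈ A, (2 * j + 1) = 2 * k ∧ Even A.card} : ℚ))
      = P⁻¹ * S := by
  classical
  have hc0 : PowerSeries.constantCoeff (R := ℚ) P = 1 := by
    obtain ⟨M, hM⟩ := hP 1
    have h1 := hM M (le_refl M)
    have h2 := congrArg (fun p => Polynomial.coeff p 0) h1
    simp only [PowerSeries.coeff_trunc, if_pos (by omega : (0:ℕ) < 1)] at h2
    rw [← PowerSeries.coeff_zero_eq_constantCoeff, ← h2,
      show (∏ i ∈ Finset.range M, (1 - (PowerSeries.X : PowerSeries ℚ) ^ (2 * (i + 1)))) = Qm M from rfl,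
      PowerSeries.coeff_zero_eq_constantCoeff]
    exact constantCoeff_Qm M
  have hPne : PowerSeries.constantCoeff (R := ℚ) P ≠ 0 := by rw [hc0]; norm_num
  have key2 : P * Lser = S := by
    apply PowerSeries.ext
    intro k
    obtain ⟨M1, hM1⟩ := hP (k+1)
    set m := max M1 (2*k+2) with hmdef
    have htr := hM1 m (le_max_left _ _)
    have hcoeffP : ∀ a, a ≤ k → PowerSeries.coeff (R := ℚ) a P = PowerSeries.coeff (R := ℚ) a (Qm m) := by
      intro a ha
      have h2 := congrArg (fun p => Polynomial.coeff p a) htr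
      simp only [PowerSeries.coeff_trunc, if_pos (by omega : a < k+1)] at h2
      exact h2.symm
    have e1 : PowerSeries.coeff (R := ℚ) k (P * Lser) = PowerSeries.coeff (R := ℚ) k (Qm m * Lser) := by
      rw [PowerSeries.coeff_mul, PowerSeries.coeff_mul]
      apply Finset.sum_congr rfl
      intro p hp
      have hpk := Finset.HasAntidiagonal.mem_antidiagonal.mp hp
      rw [hcoeffP p.1 (by omega)]
    obtain ⟨A, hA⟩ := hS (k+1)
    set B := A ∪ Finset.Icc (-(2*(k:ℤ)+2)) (2*(k:ℤ)+2) with hBdef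
    have htrS := hA B Finset.subset_union_left
    have e4 : PowerSeries.coeff (R := ℚ) k S
        = PowerSeries.coeff (R := ℚ) k (∑ n ∈ B, if Even n then
            (PowerSeries.X : PowerSeries ℚ)^((n^2 + n/2).toNat) else 0) := by
      have h2 := congrArg (fun p => Polynomial.coeff p k) htrS
      simp only [PowerSeries.coeff_trunc, if_pos (by omega : k < k+1)] at h2
      exact h2.symm
    rw [e1, K2 k m (by omega), K1 k m (by omega), e4,
      coeff_Ssum k B Finset.subset_union_right]
  show Lser = P⁻¹ * S
  rw [← key2, ← mul_assoc, PowerSeries.inv_mul_cancel P hPne, one_mul]
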